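/- Let S(D) = (δ + |D|)^(p-2) D on 2×2 symmetric matrices with δ > 0 and p ∈ (1,2]. Then S is monotone: for all symmetric 2×2 matrices A, B, (S(A) - S(B)) : (A - B) ≥ 0. -/

import Mathlib

/-- Frobenius norm of a 2×2 real matrix. -/
noncomputable def frob (A : Fin 2 → Fin 2 → ℝ) : ℝ :=
  Real.sqrt (∑ i, ∑ j, (A i j) ^ 2)

/-- Frobenius inner product `A : B`. -/
def mdot (A B : Fin 2 → Fin 2 → ℝ) : ℝ := ∑ i, ∑ j, A i j * B i j

/-- The extra stress tensor `S(D) = (δ + |D|)^(p-2) D`. -/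
noncomputable def stressS (δ p : ℝ) (D : Fin 2 → Fin 2 → ℝ) : Fin 2 → Fin 2 → ℝ :=
  fun i j => (δ + frob D) ^ (p - 2) * D i j

lemma frob_nonneg (A : Fin 2 → Fin 2 → ℝ) : 0 ≤ frob A := Real.sqrt_nonneg _

lemma mdot_self (A : Fin 2 → Fin 2 → ℝ) : mdot A A = frob A ^ 2 := by
  unfold mdot frob
  rw [Real.sq_sqrt (by positivity)]
  simp [sq]

lemma mdot_comm (A B : Fin 2 → Fin 2 → ℝ) : mdot A B = mdot B A := by
  unfold mdot; simp [mul_comm]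

lemma mdot_le (A B : Fin 2 → Fin 2 → ℝ) : mdot A B ≤ frob A * frob B := by
  have h := Finset.sum_mul_sq_le_sq_mul_sq (Finset.univ : Finset (Fin 2 × Fin 2))
    (fun x => A x.1 x.2) (fun x => B x.1 x.2)
  rw [Fintype.sum_prod_type, Fintype.sum_prod_type, Fintype.sum_prod_type] at h
  have h1 : mdot A B ≤ |mdot A B| := le_abs_self _
  have h2 : |mdot A B| = Real.sqrt ((mdot A B) ^ 2) := (Real.sqrt_sq_eq_abs _).symm
  calc mdot A B ≤ Real.sqrt ((mdot A B) ^ 2) := by rw [← h2]; exact h1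
    _ ≤ Real.sqrt ((∑ i, ∑ j, A i j ^ 2) * (∑ i, ∑ j, B i j ^ 2)) :=
        Real.sqrt_le_sqrt h
    _ = frob A * frob B := by
        unfold frob
        rw [Real.sqrt_mul (by positivity)]

/-- monotonicity of `t ↦ (δ+t)^(p-2) * t` on `t ≥ 0`. -/
lemma g_mono (δ p : ℝ) (hδ : 0 < δ) (hp1 : 1 < p) (a b : ℝ) (ha : 0 ≤ a) (hb : 0 ≤ b)
    (hab : b ≤ a) : (δ + b) ^ (p - 2) * b ≤ (δ + a) ^ (p - 2) * a := by
  have hpa : 0 < δ + a := by linarith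
  have hpb : 0 < δ + b := by linarith
  have key : ∀ t : ℝ, 0 ≤ t → (δ + t) ^ (p - 2) * t = (δ + t) ^ (p - 1) * (t / (δ + t)) := by
    intro t ht
    have h1 : (δ + t) ^ (p - 1) = (δ + t) ^ (p - 2) * (δ + t) := by
      rw [← Real.rpow_add_one (by positivity)]; ring_nf
    rw [h1]
    field_simp
  rw [key a ha, key b hb]
  apply mul_le_mul
  · exact Real.rpow_le_rpow hpb.le (by linarith) (by linarith)
  · rw [div_le_div_iff₀ hpb hpa]
    nlinarith
  · positivity
  · positivity

/-- Monotonicity of the stress tensor: for `δ > 0`, `p ∈ (1,2]` and symmetric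
2×2 matrices `A, B`, one has `(S(A) - S(B)) : (A - B) ≥ 0`. -/
theorem stress_monotone (δ p : ℝ) (hδ : 0 < δ) (hp1 : 1 < p) (hp2 : p ≤ 2)
    (A B : Fin 2 → Fin 2 → ℝ) (hA : ∀ i j, A i j = A j i) (hB : ∀ i j, B i j = B j i) :
    0 ≤ mdot (stressS δ p A - stressS δ p B) (A - B) := by
  set a := frob A with ha
  set b := frob B with hb
  have ha0 : 0 ≤ a := frob_nonneg A
  have hb0 : 0 ≤ b := frob_nonneg B
  set α := (δ + a) ^ (p - 2) with hα
  set β := (δ + b) ^ (p - 2) with hβ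
  have hα0 : 0 < α := Real.rpow_pos_of_pos (by linarith) _
  have hβ0 : 0 < β := Real.rpow_pos_of_pos (by linarith) _
  have expand : mdot (stressS δ p A - stressS δ p B) (A - B)
      = α * a ^ 2 + β * b ^ 2 - (α + β) * mdot A B := by
    have e1 : mdot (stressS δ p A - stressS δ p B) (A - B)
        = α * mdot A A - α * mdot A B - β * mdot B A + β * mdot B B := by
      unfold mdot stressS
      simp only [Pi.sub_apply, Finset.mul_sum, ← Finset.sum_sub_distrib,
        ← Finset.sum_add_distrib]
      apply Finset.sum_congr rfl; intro i _
      apply Finset.sum_congr rfl; intro j _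
      ring
    rw [e1, mdot_self, mdot_self, mdot_comm B A]
    ring
  rw [expand]
  have cs : mdot A B ≤ a * b := mdot_le A B
  have step1 : α * a ^ 2 + β * b ^ 2 - (α + β) * (a * b)
      ≤ α * a ^ 2 + β * b ^ 2 - (α + β) * mdot A B := by
    have : 0 < α + β := by linarith
    nlinarith
  refine le_trans ?_ step1
  have key : α * a ^ 2 + β * b ^ 2 - (α + β) * (a * b) = (a - b) * (α * a - β * b) := by ring
  rw [key]
  rcases le_total b a with h | h
  · have := g_mono δ p hδ hp1 a b ha0 hb0 h
    nlinarith
  · have := g_mono δ p hδ hp1 b a hb0 ha0 h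
    nlinarith
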